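/- If every hyperplane orthogonal to dimension i intersects at most k boxes of a finite set B of n boxes in R^d (i.e., the i-th profile is at most k), then restricting all boxes to the slabs of any partition of the domain into slabs each containing at most 2k endpoints yields an intersection graph (of the interiors of the restricted boxes) whose treewidth is at most 3k − 1. -/

import Mathlib

open MeasureTheory Set SimpleGraph
open scoped Classical

/-- An axis-parallel box in `ℝ^d`, given by its lower and upper corners. -/
abbrev BoxT (d : ℕ) := (Fin d → ℝ) × (Fin d → ℝ)

/-- The set of points of a box: the product of the closed intervals. -/
def boxSet {d : ℕ} (b : BoxT d) : Set (Fin d → ℝ) := Set.Icc b.1 b.2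

/-- The `j`-th slab orthogonal to dimension `i`, determined by the cut values `a`. -/
def slabSet {d m : ℕ} (i : Fin d) (a : Fin (m + 1) → ℝ) (j : Fin m) : Set (Fin d → ℝ) :=
  {x | a j.castSucc ≤ x i ∧ x i ≤ a j.succ}

/-- The restricted boxes: pairs `(b, j)` with `b ∈ B` meeting slab `j`; the point set of
the restricted box `(b, j)` is `boxSet b ∩ slabSet i a j`. -/
noncomputable def restr {d m : ℕ} (B : Finset (BoxT d)) (i : Fin d)
    (a : Fin (m + 1) → ℝ) : Finset (BoxT d × Fin m) :=
  (B ×ˢ Finset.univ).filter (fun p => (boxSet p.1 ∩ slabSet i a p.2).Nonempty)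

/-- The intersection graph of the interiors of the restricted boxes. -/
noncomputable def rGraph {d m : ℕ} (B : Finset (BoxT d)) (i : Fin d)
    (a : Fin (m + 1) → ℝ) : SimpleGraph {p : BoxT d × Fin m // p ∈ restr B i a} :=
  SimpleGraph.fromRel (fun p q =>
    (interior (boxSet p.1.1 ∩ slabSet i a p.1.2)
      ∩ interior (boxSet q.1.1 ∩ slabSet i a q.1.2)).Nonempty)

/-- The bag of slab `j`: the restricted boxes lying in slab `j`. -/
noncomputable def rBag {d m : ℕ} (B : Finset (BoxT d)) (i : Fin d)
    (a : Fin (m + 1) → ℝ) (j : Fin m) : Set {p : BoxT d × Fin m // p ∈ restr B i a} :=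
  {p | p.1.2 = j}

/-- Auxiliary: walks in the path graph with the edge `s(x,y)` removed cannot cross `x`. -/
lemma pathGraph_stay {m : ℕ} {x y : Fin m} (hxy : x.val + 1 = y.val) :
    ∀ {u v : Fin m} (w : ((SimpleGraph.pathGraph m) \ SimpleGraph.fromEdgeSet {s(x, y)}).Walk u v),
      u.val ≤ x.val → v.val ≤ x.val := by
  intro u v w
  induction w with
  | nil => exact id
  | @cons u z v h p ih =>
    intro hu
    apply ih
    rw [SimpleGraph.sdiff_adj] at h
    obtain ⟨hadj, hne⟩ := h
    rw [SimpleGraph.pathGraph_adj] at hadj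
    rcases hadj with h1 | h1
    · -- u + 1 = z
      by_contra hz
      push_neg at hz
      have hux : u.val = x.val := by omega
      have hzy : z.val = y.val := by omega
      have : u = x := Fin.ext hux
      have : z = y := Fin.ext hzy
      subst ‹u = x›; subst ‹z = y›
      exact hne ((SimpleGraph.fromEdgeSet_adj _).2 ⟨rfl, by omega⟩)
    · omega

lemma pathGraph_isTree {m : ℕ} (hm : 1 ≤ m) : (SimpleGraph.pathGraph m).IsTree := by
  haveI : Nonempty (Fin m) := ⟨⟨0, hm⟩⟩
  refine ⟨⟨SimpleGraph.pathGraph_preconnected m⟩, ?_⟩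
  rw [SimpleGraph.isAcyclic_iff_forall_adj_isBridge]
  have key : ∀ x y : Fin m, x.val + 1 = y.val →
      (SimpleGraph.pathGraph m).IsBridge s(x, y) := by
    intro x y hxy
    rw [SimpleGraph.isBridge_iff]
    rintro ⟨w⟩
    have := pathGraph_stay hxy w le_rfl
    omega
  intro v w hvw
  rcases SimpleGraph.pathGraph_adj.1 hvw with h | h
  · exact key v w h
  · rw [Sym2.eq_swap]; exact key w v h

/-- If `S` lies in the halfspace `{y | y i ≤ c}` then its interior lies strictly below `c`. -/
lemma lt_of_mem_interior_halfspace {d : ℕ} {S : Set (Fin d → ℝ)} {i : Fin d} {c : ℝ}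
    (hS : ∀ y ∈ S, y i ≤ c) {x : Fin d → ℝ} (hx : x ∈ interior S) : x i < c := by
  obtain ⟨ε, hε, hball⟩ := Metric.mem_nhds_iff.1 (mem_interior_iff_mem_nhds.1 hx)
  have hmem : Function.update x i (x i + ε / 2) ∈ Metric.ball x ε := by
    rw [Metric.mem_ball, dist_pi_lt_iff hε]
    intro l
    rcases eq_or_ne l i with rfl | h
    · rw [Function.update_self, Real.dist_eq]
      rw [show x l + ε / 2 - x l = ε / 2 by ring, abs_of_nonneg (by linarith)]
      linarith
    · rw [Function.update_of_ne h]
      simpa using hε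
  have h2 := hS _ (hball hmem)
  rw [Function.update_self] at h2
  linarith

/-- If the `i`-th profile of `B` is at most `k` and the domain is partitioned into slabs
each containing at most `2k` endpoints strictly inside, then the intersection graph of the
interiors of the restricted boxes has treewidth at most `3k − 1`: the path of slabs with
one bag per slab is a tree, and a tree decomposition of width at most `3k − 1`. -/

theorem stmt18 {d : ℕ} (B : Finset (BoxT d)) (i : Fin d) (k : ℕ)
    (hprof : ∀ t : ℝ, (B.filter (fun b => b.1 i ≤ t ∧ t ≤ b.2 i)).card ≤ k)
    (m : ℕ) (hm : 1 ≤ m) (a : Fin (m + 1) → ℝ) (ha : Monotone a)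
    (hcov : ∀ b ∈ B, a 0 ≤ b.1 i ∧ b.2 i ≤ a (Fin.last m))
    (hend : ∀ j : Fin m,
      (B.filter (fun b => a j.castSucc < b.1 i ∧ b.1 i < a j.succ)).card
        + (B.filter (fun b => a j.castSucc < b.2 i ∧ b.2 i < a j.succ)).card ≤ 2 * k) :
    (SimpleGraph.pathGraph m).IsTree ∧
    (∀ p : {p : BoxT d × Fin m // p ∈ restr B i a}, ∃ j, p ∈ rBag B i a j) ∧
    (∀ p q : {p : BoxT d × Fin m // p ∈ restr B i a}, (rGraph B i a).Adj p q →
      ∃ j, p ∈ rBag B i a j ∧ q ∈ rBag B i a j) ∧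
    (∀ (p : {p : BoxT d × Fin m // p ∈ restr B i a}) (j j' : Fin m)
      (w : (SimpleGraph.pathGraph m).Walk j j'), w.IsPath →
      p ∈ rBag B i a j → p ∈ rBag B i a j' → ∀ l ∈ w.support, p ∈ rBag B i a l) ∧
    (∀ j : Fin m, (rBag B i a j).ncard ≤ 3 * k) := by
  constructor
  · exact pathGraph_isTree hm
  refine ⟨fun p => ⟨p.1.2, rfl⟩, ?_, ?_, ?_⟩
  · -- adjacency stays within a bag
    intro p q hadj
    rw [rGraph, SimpleGraph.fromRel_adj] at hadj
    have hup : ∀ (b : BoxT d) (j : Fin m) (x : Fin d → ℝ),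
        x ∈ interior (boxSet b ∩ slabSet i a j) → a j.castSucc ≤ x i ∧ x i < a j.succ := by
      intro b j x hx
      refine ⟨(interior_subset hx).2.1, ?_⟩
      exact lt_of_mem_interior_halfspace (fun y hy => hy.2.2) hx
    have hkey : ∀ (P Q : {p : BoxT d × Fin m // p ∈ restr B i a}),
        (interior (boxSet P.1.1 ∩ slabSet i a P.1.2)
          ∩ interior (boxSet Q.1.1 ∩ slabSet i a Q.1.2)).Nonempty → P.1.2 = Q.1.2 := by
      intro P Q ⟨x, hxP, hxQ⟩
      by_contra hne
      obtain ⟨h1, h2⟩ := hup _ _ _ hxP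
      obtain ⟨h3, h4⟩ := hup _ _ _ hxQ
      rcases lt_or_gt_of_ne hne with h | h
      · have : a P.1.2.succ ≤ a Q.1.2.castSucc := by
          apply ha
          rw [Fin.le_def]
          simp only [Fin.val_succ, Fin.coe_castSucc]
          exact h
        linarith
      · have : a Q.1.2.succ ≤ a P.1.2.castSucc := by
          apply ha
          rw [Fin.le_def]
          simp only [Fin.val_succ, Fin.coe_castSucc]
          exact h
        linarith
    rcases hadj.2 with h | h
    · exact ⟨p.1.2, rfl, (hkey p q h).symm⟩
    · exact ⟨p.1.2, rfl, (hkey q p h)⟩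
  · -- paths between equal bags stay in the bag
    intro p j j' w hw hj hj'
    have hjj' : j = j' := by
      have h1 : p.1.2 = j := hj
      have h2 : p.1.2 = j' := hj'
      rw [← h1, h2]
    subst hjj'
    have : w = SimpleGraph.Walk.nil := SimpleGraph.Walk.isPath_iff_eq_nil.mp hw
    subst this
    intro l hl
    simp only [SimpleGraph.Walk.support_nil, List.mem_singleton] at hl
    subst hl
    exact hj
  · -- the bag bound
    intro j
    set M : Finset (BoxT d) := B.filter (fun b => (boxSet b ∩ slabSet i a j).Nonempty) with hM
    have hfin : (rBag B i a j).Finite := Set.toFinite _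
    rw [Set.ncard_eq_toFinset_card _ hfin]
    have hcard1 : hfin.toFinset.card ≤ M.card := by
      apply Finset.card_le_card_of_injOn (fun p => p.1.1)
      · intro p hp
        simp only [Finset.mem_coe, Set.Finite.mem_toFinset] at hp
        have hpj : p.1.2 = j := hp
        have hpr := p.2
        simp only [restr, Finset.mem_filter, Finset.mem_product, Finset.mem_univ, and_true] at hpr
        rw [hM, Finset.mem_coe, Finset.mem_filter]
        refine ⟨hpr.1, ?_⟩
        rw [← hpj]
        exact hpr.2
      · intro p hp q hq hpq
        simp only [Finset.mem_coe, Set.Finite.mem_toFinset] at hp hq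
        have hpj : p.1.2 = j := hp
        have hqj : q.1.2 = j := hq
        exact Subtype.ext (Prod.ext hpq (hpj.trans hqj.symm))
    refine le_trans hcard1 ?_
    set M1 : Finset (BoxT d) := B.filter (fun b => b.1 i ≤ a j.castSucc ∧ a j.castSucc ≤ b.2 i) with hM1
    set M2 : Finset (BoxT d) := B.filter (fun b => b.1 i ≤ a j.succ ∧ a j.succ ≤ b.2 i) with hM2
    set M3 : Finset (BoxT d) := B.filter
      (fun b => (a j.castSucc < b.1 i ∧ b.1 i < a j.succ) ∧ (a j.castSucc < b.2 i ∧ b.2 i < a j.succ)) with hM3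
    have hsub : M ⊆ M1 ∪ M2 ∪ M3 := by
      intro b hb
      rw [hM, Finset.mem_filter] at hb
      obtain ⟨hbB, x, hx1, hx2⟩ := hb
      have h1 : b.1 i ≤ x i := hx1.1 i
      have h2 : x i ≤ b.2 i := hx1.2 i
      have h3 : a j.castSucc ≤ x i := hx2.1
      have h4 : x i ≤ a j.succ := hx2.2
      simp only [Finset.mem_union, hM1, hM2, hM3, Finset.mem_filter]
      by_cases hL : b.1 i ≤ a j.castSucc
      · exact Or.inl (Or.inl ⟨hbB, hL, by linarith⟩)
      · push_neg at hL
        by_cases hR : a j.succ ≤ b.2 i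
        · exact Or.inl (Or.inr ⟨hbB, by linarith, hR⟩)
        · push_neg at hR
          exact Or.inr ⟨hbB, ⟨hL, by linarith⟩, ⟨by linarith, hR⟩⟩
    have hc1 : M1.card ≤ k := hprof (a j.castSucc)
    have hc2 : M2.card ≤ k := hprof (a j.succ)
    have hc3 : M3.card ≤ k := by
      have hA : M3 ⊆ B.filter (fun b => a j.castSucc < b.1 i ∧ b.1 i < a j.succ) := by
        intro b hb
        rw [hM3, Finset.mem_filter] at hb
        rw [Finset.mem_filter]
        exact ⟨hb.1, hb.2.1⟩
      have hB : M3 ⊆ B.filter (fun b => a j.castSucc < b.2 i ∧ b.2 i < a j.succ) := by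
        intro b hb
        rw [hM3, Finset.mem_filter] at hb
        rw [Finset.mem_filter]
        exact ⟨hb.1, hb.2.2⟩
      have := hend j
      have hA' := Finset.card_le_card hA
      have hB' := Finset.card_le_card hB
      omega
    calc M.card ≤ (M1 ∪ M2 ∪ M3).card := Finset.card_le_card hsub
      _ ≤ (M1 ∪ M2).card + M3.card := Finset.card_union_le _ _
      _ ≤ M1.card + M2.card + M3.card := by
          have := Finset.card_union_le M1 M2
          omega
      _ ≤ 3 * k := by omega
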